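/- Let p be a prime, μ a positive integer, and F : ℤ → ℤ defined by F(x) = μ·x·(x+1). Suppose n ≥ 1, w ≥ 2, x is an integer divisible by p, the sum ∑_{j=0}^{n-1} μ^j is divisible by p, and F^[n](x) = x + k·p^w for some integer k not divisible by p (equivalently, F^[n](x) ≡ x (mod p^w) but F^[n](x) ≢ x (mod p^{w+1})). Then for every i ≥ 1, F^[i·n](x) ≡ x + k·p^w·(∑_{j=0}^{i-1} μ^{j·n}) (mod p^{w+2}). -/

import Mathlib

/-- Property 4: Let `p` be prime, `μ` a positive integer, `F(x) = μ·x·(x+1)` on `ℤ`,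
`n ≥ 1`, `w ≥ 2`, `p ∣ x`, `p ∣ ∑_{j=0}^{n-1} μ^j`, and `F^[n](x) = x + k·p^w` with
`p ∤ k`. Then for every `i ≥ 1`,
`F^[i·n](x) ≡ x + k·p^w·(∑_{j=0}^{i-1} μ^{j·n}) (mod p^{w+2})`. -/
theorem logistic_iterate_mul_modEq (p : ℕ) (hp : p.Prime) (μ : ℕ) (hμ : 0 < μ)
    (n w : ℕ) (hn : 1 ≤ n) (hw : 2 ≤ w) (x k : ℤ) (hx : (p : ℤ) ∣ x)
    (hsum : (p : ℤ) ∣ ∑ j ∈ Finset.range n, (μ : ℤ) ^ j)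
    (hk : ¬ (p : ℤ) ∣ k)
    (hFn : (fun y : ℤ => (μ : ℤ) * y * (y + 1))^[n] x = x + k * (p : ℤ) ^ w) :
    ∀ i : ℕ, 1 ≤ i →
      (fun y : ℤ => (μ : ℤ) * y * (y + 1))^[i * n] x ≡
        x + k * (p : ℤ) ^ w * ∑ j ∈ Finset.range i, (μ : ℤ) ^ (j * n)
          [ZMOD (p : ℤ) ^ (w + 2)] := by
  set F : ℤ → ℤ := fun y => (μ : ℤ) * y * (y + 1) with hFdef
  -- p divides every iterate
  have hA : ∀ m, (p : ℤ) ∣ F^[m] x := by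
    intro m
    induction m with
    | zero => simpa using hx
    | succ m ih =>
      rw [Function.iterate_succ_apply']
      exact ((ih.mul_left _).mul_right _)
  -- iterates mod p^2
  have hB : ∀ m, ((p : ℤ))^2 ∣ (μ : ℤ)^m * x - F^[m] x := by
    intro m
    induction m with
    | zero => simp
    | succ m ih =>
      rw [Function.iterate_succ_apply']
      have hy := hA m
      set y := F^[m] x with hy'
      have h1 : ((p : ℤ))^2 ∣ (μ : ℤ) * y - F y := by
        have h0 : ((p : ℤ))^2 ∣ y * y := by rw [pow_two]; exact mul_dvd_mul hy hy
        have : (μ : ℤ) * y - F y = -((μ : ℤ) * (y * y)) := by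
          simp only [hFdef]; ring
        rw [this]
        exact dvd_neg.mpr (h0.mul_left _)
      have h2 : ((p : ℤ))^2 ∣ (μ : ℤ)^(m+1) * x - (μ : ℤ) * y := by
        have : (μ : ℤ)^(m+1) * x - (μ : ℤ) * y = (μ : ℤ) * ((μ : ℤ)^m * x - y) := by
          ring
        rw [this]
        exact ih.mul_left _
      have := h2.add h1
      simpa using this
  -- the "derivative" product
  set P : ℕ → ℤ := fun m => ∏ t ∈ Finset.range m, ((μ : ℤ) * (2 * F^[t] x + 1)) with hPdef
  -- first order expansion of iterates
  have hC : ∀ d : ℤ, ∀ m, ∃ c : ℤ, F^[m] (x + d) = F^[m] x + d * P m + d^2 * c := by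
    intro d m
    induction m with
    | zero => exact ⟨0, by simp [hPdef]⟩
    | succ m ih =>
      obtain ⟨c, hc⟩ := ih
      set z := F^[m] x with hz
      refine ⟨(μ : ℤ) * c * (2 * z + 1) + (μ : ℤ) * (P m + d * c)^2, ?_⟩
      rw [Function.iterate_succ_apply', Function.iterate_succ_apply', hc]
      have hP : P (m + 1) = P m * ((μ : ℤ) * (2 * z + 1)) := by
        rw [hPdef]; exact Finset.prod_range_succ _ _
      rw [hP]
      simp only [hFdef]
      ring
  -- P n ≡ μ^n mod p^2
  have hS : ((p : ℤ))^2 ∣ ∑ t ∈ Finset.range n, F^[t] x := by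
    have h1 : ((p : ℤ))^2 ∣ ∑ t ∈ Finset.range n, ((μ : ℤ)^t * x - F^[t] x) :=
      Finset.dvd_sum fun t _ => hB t
    have h2 : ((p : ℤ))^2 ∣ (∑ t ∈ Finset.range n, (μ : ℤ)^t) * x := by
      rw [pow_two]
      exact mul_dvd_mul hsum hx
    have h3 : (∑ t ∈ Finset.range n, (μ : ℤ)^t) * x
        - ∑ t ∈ Finset.range n, ((μ : ℤ)^t * x - F^[t] x)
        = ∑ t ∈ Finset.range n, F^[t] x := by
      rw [Finset.sum_sub_distrib, Finset.sum_mul]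
      ring
    rw [← h3]
    exact h2.sub h1
  have hQ : ∀ m, ∃ s : ℤ, (∏ t ∈ Finset.range m, (2 * F^[t] x + 1))
      = 1 + 2 * (∑ t ∈ Finset.range m, F^[t] x) + (p : ℤ)^2 * s := by
    intro m
    induction m with
    | zero => exact ⟨0, by simp⟩
    | succ m ih =>
      obtain ⟨s, hs⟩ := ih
      obtain ⟨a, ha⟩ : (p : ℤ) ∣ ∑ t ∈ Finset.range m, F^[t] x :=
        Finset.dvd_sum fun t _ => hA t
      obtain ⟨b, hb⟩ := hA m
      refine ⟨s * (2 * F^[m] x + 1) + 4 * a * b, ?_⟩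
      rw [Finset.prod_range_succ, Finset.sum_range_succ, hs, ha, hb]
      ring
  have hD : ((p : ℤ))^2 ∣ P n - (μ : ℤ)^n := by
    obtain ⟨s, hs⟩ := hQ n
    have hPn : P n = (μ : ℤ)^n * ∏ t ∈ Finset.range n, (2 * F^[t] x + 1) := by
      rw [hPdef]
      simp [Finset.prod_mul_distrib]
    obtain ⟨u, hu⟩ := hS
    refine ⟨(μ : ℤ)^n * (2 * u + s), ?_⟩
    rw [hPn, hs, hu]
    ring
  -- key step lemma
  have hE : ∀ c : ℤ, ((p : ℤ))^(w+2) ∣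
      F^[n] (x + c * (p : ℤ)^w) - (x + k * (p : ℤ)^w + c * (μ : ℤ)^n * (p : ℤ)^w) := by
    intro c
    obtain ⟨e, he⟩ := hC (c * (p : ℤ)^w) n
    rw [he, hFn]
    have h1 : ((p : ℤ))^(w+2) ∣ c * (p : ℤ)^w * (P n - (μ : ℤ)^n) := by
      obtain ⟨v, hv⟩ := hD
      refine ⟨c * v, ?_⟩
      rw [hv, pow_add]
      ring
    have h2 : ((p : ℤ))^(w+2) ∣ (c * (p : ℤ)^w)^2 * e := by
      obtain ⟨v, hv⟩ : ((p : ℤ))^(w+2) ∣ ((p : ℤ)^w)^2 := by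
        rw [← pow_mul]; exact pow_dvd_pow _ (by omega)
      refine ⟨c^2 * v * e, ?_⟩
      rw [mul_pow, hv]; ring
    have := h1.add h2
    have h3 : x + k * (p : ℤ)^w + c * (p : ℤ)^w * P n + (c * (p : ℤ)^w)^2 * e -
        (x + k * (p : ℤ)^w + c * (μ : ℤ)^n * (p : ℤ)^w)
        = c * (p : ℤ)^w * (P n - (μ : ℤ)^n) + (c * (p : ℤ)^w)^2 * e := by ring
    rw [h3]
    exact this
  -- main induction
  have main : ∀ i : ℕ, ((p : ℤ))^(w+2) ∣
      F^[i * n] x - (x + k * (p : ℤ)^w * ∑ j ∈ Finset.range i, (μ : ℤ)^(j * n)) := by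
    intro i
    induction i with
    | zero => simp
    | succ i ih =>
      obtain ⟨e, he⟩ : ∃ e, F^[i * n] x
          = x + k * (p : ℤ)^w * (∑ j ∈ Finset.range i, (μ : ℤ)^(j * n)) + (p : ℤ)^(w+2) * e := by
        obtain ⟨e, he⟩ := ih
        exact ⟨e, by linarith⟩
      have hit : F^[(i+1) * n] x = F^[n] (F^[i * n] x) := by
        rw [add_mul, one_mul, add_comm (i * n) n, Function.iterate_add_apply]
      set S := ∑ j ∈ Finset.range i, (μ : ℤ)^(j * n) with hSdef
      have hx' : F^[i * n] x = x + (k * S + (p : ℤ)^2 * e) * (p : ℤ)^w := by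
        rw [he, pow_add]; ring
      have hkey := hE (k * S + (p : ℤ)^2 * e)
      rw [hit, hx']
      have hSucc : ∑ j ∈ Finset.range (i+1), (μ : ℤ)^(j * n) = 1 + (μ : ℤ)^n * S := by
        rw [Finset.sum_range_succ', hSdef, Finset.mul_sum]
        simp only [pow_add, add_mul, one_mul, pow_mul, zero_mul, pow_zero]
        rw [add_comm]
        congr 1
        exact Finset.sum_congr rfl fun t _ => mul_comm _ _
      rw [hSucc]
      obtain ⟨v, hv⟩ := hkey
      refine ⟨v + (μ : ℤ)^n * e, ?_⟩
      have hexp : F^[n] (x + (k * S + (p : ℤ)^2 * e) * (p : ℤ)^w)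
          = x + k * (p : ℤ)^w + (k * S + (p : ℤ)^2 * e) * (μ : ℤ)^n * (p : ℤ)^w
            + (p : ℤ)^(w+2) * v := by linarith
      rw [hexp, pow_add]
      ring
  intro i _
  have := main i
  exact (Int.modEq_iff_dvd.mpr (by obtain ⟨v, hv⟩ := this; exact ⟨-v, by linarith⟩))
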